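/- arXiv:1612.02024 — 2 statements merged into one kernel-verified Lean document; each statement's English description precedes it below -/
import Mathlib

section
/- Suppose 𝒫₁ is indistinguishable from 𝒫₀ in the weak distance and, symmetrically, 𝒫₀ is indistinguishable from 𝒫₁ in the weak distance. Then every test φ that is a.s. continuous under every distribution in 𝒫 = 𝒫₀ ∪ 𝒫₁ has power equal to size: sup_{Q∈𝒫₁} E_Q[φ] = sup_{P∈𝒫₀} E_P[φ]. -/
open MeasureTheory Filter
open Topology
open scoped NNReal ENNReal

/-- The distribution of an i.i.d. sample of size `n` from `P`: the `n`-fold product measure. -/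
noncomputable def sampleDist (n : ℕ) {E : Type*} [MeasurableSpace E]
    (P : ProbabilityMeasure E) : Measure (Fin n → E) :=
  Measure.pi fun _ => (P : Measure E)

instance sampleDist.instIsProbabilityMeasure {n : ℕ} {E : Type*} [MeasurableSpace E]
    (P : ProbabilityMeasure E) : IsProbabilityMeasure (sampleDist n P) := by
  unfold sampleDist; infer_instance


/-- marginal weak convergence from ConvDM -/
lemma marginal_tendsto {l : ℕ} {P : ℕ → ProbabilityMeasure (Fin l → ℝ)}
    {Q : ProbabilityMeasure (Fin l → ℝ)}
    (h : ∀ g : (Fin l → ℝ) → ℝ, Continuous g → (∃ C, ∀ x, |g x| ≤ C) →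
      Tendsto (fun k => ∫ x, g x ∂ (P k : Measure (Fin l → ℝ))) atTop
        (nhds (∫ x, g x ∂ (Q : Measure (Fin l → ℝ))))) :
    Tendsto P atTop (𝓝 Q) := by
  rw [ProbabilityMeasure.tendsto_iff_forall_integral_tendsto]
  intro f
  exact h f f.continuous ⟨‖f‖, fun x => by
    simpa [Real.norm_eq_abs] using f.norm_coe_le_norm x⟩

/-- choice of grid cut points avoiding marginal atoms -/
lemma exists_cuts {l : ℕ} (Q : ProbabilityMeasure (Fin l → ℝ)) {δ : ℝ} (hδ : 0 < δ) :
    ∃ t : ℤ → ℝ, (∀ j : ℤ, t j ∈ Set.Ioo (j * δ) (j * δ + δ)) ∧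
      (∀ j : ℤ, ∀ i : Fin l, (Q : Measure (Fin l → ℝ)) {x | x i = t j} = 0) := by
  classical
  set A : Set ℝ := ⋃ i : Fin l, {c : ℝ | 0 < (Q : Measure (Fin l → ℝ)) {x | x i = c}} with hA
  have hAc : A.Countable := by
    refine Set.countable_iUnion fun i => ?_
    exact Measure.countable_meas_level_set_pos (measurable_pi_apply i)
  have key : ∀ j : ℤ, ∃ c : ℝ, c ∈ Set.Ioo ((j:ℝ) * δ) ((j:ℝ) * δ + δ) ∧ c ∉ A := by
    intro j
    by_contra hcon
    simp only [not_exists, not_and] at hcon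
    have hsub : Set.Ioo ((j:ℝ) * δ) ((j:ℝ) * δ + δ) ⊆ A := fun c hc => by
      exact not_not.mp (hcon c hc)
    have h0 : (volume : Measure ℝ) (Set.Ioo ((j:ℝ) * δ) ((j:ℝ) * δ + δ)) = 0 :=
      measure_mono_null hsub (Set.Countable.measure_zero hAc _)
    rw [Real.volume_Ioo] at h0
    simp only [ENNReal.ofReal_eq_zero] at h0
    linarith
  choose t ht1 ht2 using key
  refine ⟨t, ht1, fun j i => ?_⟩
  by_contra hne
  exact ht2 j (Set.mem_iUnion.2 ⟨i, by
    simp only [Set.mem_setOf_eq]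
    exact pos_iff_ne_zero.mpr hne⟩)


section Boxes
variable {l n : ℕ} {δ : ℝ} {t : ℤ → ℝ}

/-- 1d grid facts -/
lemma cuts_lt (hδ : 0 < δ) (ht : ∀ j : ℤ, t j ∈ Set.Ioo ((j:ℝ) * δ) ((j:ℝ) * δ + δ))
    {j j' : ℤ} (h : j < j') : t j < t j' := by
  have h1 := (ht j).2
  have h2 := (ht j').1
  have : ((j:ℝ) + 1) * δ ≤ (j':ℝ) * δ := by
    apply mul_le_mul_of_nonneg_right _ hδ.le
    have : (j:ℝ) + 1 ≤ (j':ℝ) := by exact_mod_cast h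
    linarith
  nlinarith

lemma cuts_cover (hδ : 0 < δ) (ht : ∀ j : ℤ, t j ∈ Set.Ioo ((j:ℝ) * δ) ((j:ℝ) * δ + δ))
    (x : ℝ) : ∃ j : ℤ, t j ≤ x ∧ x < t (j + 1) := by
  set j0 := ⌊x / δ⌋ with hj0
  have h1 : (j0 : ℝ) * δ ≤ x := by
    rw [← le_div_iff₀ hδ]
    exact Int.floor_le _
  have h2 : x < ((j0 : ℝ) + 1) * δ := by
    rw [← div_lt_iff₀ hδ]
    exact Int.lt_floor_add_one _
  have ha : t (j0 - 1) ≤ x := by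
    have := (ht (j0 - 1)).2
    push_cast at this
    nlinarith
  have hb : x < t (j0 + 1) := by
    have := (ht (j0 + 1)).1
    push_cast at this
    nlinarith
  by_cases hx : x < t j0
  · exact ⟨j0 - 1, ha, by simpa using hx⟩
  · exact ⟨j0, not_lt.mp hx, hb⟩

lemma cuts_width (hδ : 0 < δ) (ht : ∀ j : ℤ, t j ∈ Set.Ioo ((j:ℝ) * δ) ((j:ℝ) * δ + δ))
    {j : ℤ} {x y : ℝ} (hx : x ∈ Set.Ico (t j) (t (j+1))) (hy : y ∈ Set.Ico (t j) (t (j+1))) :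
    dist x y ≤ 2 * δ := by
  have h1 := (ht j).1
  have h2 := (ht (j+1)).2
  push_cast at h2
  rw [Real.dist_eq, abs_le]
  obtain ⟨hx1, hx2⟩ := hx
  obtain ⟨hy1, hy2⟩ := hy
  constructor <;> nlinarith

/-- boxes in the sample space -/
def MBox (n l : ℕ) (t : ℤ → ℝ) (J : Fin n → Fin l → ℤ) : Set (Fin n → Fin l → ℝ) :=
  Set.pi Set.univ fun a => Set.pi Set.univ fun i =>
    Set.Ico (t (J a i)) (t (J a i + 1))

lemma mem_MBox {J : Fin n → Fin l → ℤ} {z : Fin n → Fin l → ℝ} :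
    z ∈ MBox n l t J ↔ ∀ a i, t (J a i) ≤ z a i ∧ z a i < t (J a i + 1) := by
  simp [MBox, Set.mem_pi, Set.mem_Ico]

lemma MBox_measurable (J : Fin n → Fin l → ℤ) : MeasurableSet (MBox n l t J) := by
  apply MeasurableSet.univ_pi
  intro a
  exact MeasurableSet.univ_pi fun i => measurableSet_Ico

lemma MBox_cover (hδ : 0 < δ) (ht : ∀ j : ℤ, t j ∈ Set.Ioo ((j:ℝ) * δ) ((j:ℝ) * δ + δ))
    (z : Fin n → Fin l → ℝ) : ∃ J, z ∈ MBox n l t J := by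
  have := fun a i => cuts_cover hδ ht (z a i)
  choose J hJ using this
  exact ⟨J, mem_MBox.mpr hJ⟩

lemma MBox_disjoint (hδ : 0 < δ) (ht : ∀ j : ℤ, t j ∈ Set.Ioo ((j:ℝ) * δ) ((j:ℝ) * δ + δ)) :
    Pairwise (Function.onFun Disjoint (MBox n l t)) := by
  intro J J' hne
  rw [Function.onFun, Set.disjoint_left]
  intro z hz hz'
  rw [mem_MBox] at hz hz'
  apply hne
  funext a i
  by_contra hne'
  rcases lt_or_gt_of_ne hne' with h | h
  · have h1 := (hz a i).2
    have h2 := (hz' a i).1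
    have : t (J a i + 1) ≤ t (J' a i) := by
      rcases eq_or_lt_of_le (Int.add_one_le_iff.mpr h) with h' | h'
      · rw [h']
      · exact (cuts_lt hδ ht h').le
    linarith
  · have h1 := (hz' a i).2
    have h2 := (hz a i).1
    have : t (J' a i + 1) ≤ t (J a i) := by
      rcases eq_or_lt_of_le (Int.add_one_le_iff.mpr h) with h' | h'
      · rw [h']
      · exact (cuts_lt hδ ht h').le
    linarith

lemma MBox_dist (hδ : 0 < δ) (ht : ∀ j : ℤ, t j ∈ Set.Ioo ((j:ℝ) * δ) ((j:ℝ) * δ + δ))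
    {J : Fin n → Fin l → ℤ} {z w : Fin n → Fin l → ℝ}
    (hz : z ∈ MBox n l t J) (hw : w ∈ MBox n l t J) : dist z w ≤ 2 * δ := by
  rw [mem_MBox] at hz hw
  rw [dist_pi_le_iff (by positivity)]
  intro a
  rw [dist_pi_le_iff (by positivity)]
  intro i
  exact cuts_width hδ ht ⟨(hz a i).1, (hz a i).2⟩ ⟨(hw a i).1, (hw a i).2⟩

end Boxes



section W3
variable {l n : ℕ} {t : ℤ → ℝ}

/-- marginal box -/
def CBox (l : ℕ) (t : ℤ → ℝ) (c : Fin l → ℤ) : Set (Fin l → ℝ) :=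
  Set.pi Set.univ fun i => Set.Ico (t (c i)) (t (c i + 1))


lemma CBox_measurable (c : Fin l → ℤ) : MeasurableSet (CBox l t c) :=
  MeasurableSet.univ_pi fun _ => measurableSet_Ico

lemma sampleDist_MBox (P : ProbabilityMeasure (Fin l → ℝ)) (J : Fin n → Fin l → ℤ) :
    sampleDist n P (MBox n l t J) = ∏ a : Fin n, (P : Measure (Fin l → ℝ)) (CBox l t (J a)) := by
  rw [sampleDist, MBox]
  exact Measure.pi_pi _ _

lemma frontier_CBox_subset (c : Fin l → ℤ) :
    frontier (CBox l t c) ⊆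
      ⋃ i : Fin l, ({x : Fin l → ℝ | x i = t (c i)} ∪ {x | x i = t (c i + 1)}) := by
  intro x hx
  have hcl : x ∈ Set.pi Set.univ fun i => Set.Icc (t (c i)) (t (c i + 1)) := by
    have h1 : closure (CBox l t c) ⊆ Set.pi Set.univ fun i => Set.Icc (t (c i)) (t (c i + 1)) := by
      apply closure_minimal _ (isClosed_set_pi fun i _ => isClosed_Icc)
      exact Set.pi_mono fun i _ => Set.Ico_subset_Icc_self
    exact h1 hx.1
  have hni : x ∉ Set.pi Set.univ fun i => Set.Ioo (t (c i)) (t (c i + 1)) := by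
    intro hmem
    apply hx.2
    have h2 : (Set.pi Set.univ fun i => Set.Ioo (t (c i)) (t (c i + 1))) ⊆ interior (CBox l t c) := by
      apply interior_maximal _ (isOpen_set_pi Set.finite_univ fun i _ => isOpen_Ioo)
      exact Set.pi_mono fun i _ => Set.Ioo_subset_Ico_self
    exact h2 hmem
  simp only [Set.mem_pi, Set.mem_univ, forall_true_left, not_forall] at hni
  obtain ⟨i, hi⟩ := hni
  rcases hi with hi
  have hxi := hcl i (Set.mem_univ i)
  rw [Set.mem_iUnion]
  refine ⟨i, ?_⟩
  rw [Set.mem_Icc] at hxi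
  rw [Set.mem_Ioo] at hi
  simp only [Set.mem_union, Set.mem_setOf_eq]
  rcases eq_or_lt_of_le hxi.1 with h | h
  · exact Or.inl h.symm
  · rcases eq_or_lt_of_le hxi.2 with h' | h'
    · exact Or.inr h'
    · exact absurd ⟨h, h'⟩ hi

lemma frontier_CBox_null (Q : ProbabilityMeasure (Fin l → ℝ))
    (hQt : ∀ (j : ℤ) (i : Fin l), (Q : Measure (Fin l → ℝ)) {x | x i = t j} = 0)
    (c : Fin l → ℤ) :
    (Q : Measure (Fin l → ℝ)) (frontier (CBox l t c)) = 0 := by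
  apply measure_mono_null (frontier_CBox_subset c)
  apply measure_iUnion_null fun i => ?_
  exact measure_union_null (hQt (c i) i) (hQt (c i + 1) i)

lemma tendsto_sampleDist_MBox {P : ℕ → ProbabilityMeasure (Fin l → ℝ)}
    {Q : ProbabilityMeasure (Fin l → ℝ)} (hP : Tendsto P atTop (𝓝 Q))
    (hQt : ∀ (j : ℤ) (i : Fin l), (Q : Measure (Fin l → ℝ)) {x | x i = t j} = 0)
    (J : Fin n → Fin l → ℤ) :
    Tendsto (fun k => sampleDist n (P k) (MBox n l t J)) atTop
      (𝓝 (sampleDist n Q (MBox n l t J))) := by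
  have hmarg : ∀ a : Fin n, Tendsto (fun k => P k (CBox l t (J a))) atTop
      (𝓝 (Q (CBox l t (J a)))) := by
    intro a
    apply ProbabilityMeasure.tendsto_measure_of_null_frontier_of_tendsto hP
    have h := frontier_CBox_null Q hQt (J a)
    have h2 : (↑(Q (frontier (CBox l t (J a)))) : ℝ≥0∞) = 0 := by
      rw [ProbabilityMeasure.ennreal_coeFn_eq_coeFn_toMeasure]; exact h
    exact_mod_cast h2
  have hprod : Tendsto (fun k => ∏ a : Fin n, P k (CBox l t (J a))) atTop
      (𝓝 (∏ a : Fin n, Q (CBox l t (J a)))) :=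
    tendsto_finset_prod _ fun a _ => hmarg a
  have key : ∀ (R : ProbabilityMeasure (Fin l → ℝ)),
      sampleDist n R (MBox n l t J) = ((∏ a : Fin n, R (CBox l t (J a)) : ℝ≥0) : ℝ≥0∞) := by
    intro R
    rw [sampleDist_MBox, ENNReal.coe_finset_prod]
    congr 1
    funext a
    rw [ProbabilityMeasure.ennreal_coeFn_eq_coeFn_toMeasure]
  simp only [key]
  exact ENNReal.tendsto_coe.mpr hprod

end W3

section W4
variable {l n : ℕ}

lemma limsup_closed_le {P : ℕ → ProbabilityMeasure (Fin l → ℝ)}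
    {Q : ProbabilityMeasure (Fin l → ℝ)} (hP : Tendsto P atTop (𝓝 Q))
    {F : Set (Fin n → Fin l → ℝ)} (hF : IsClosed F) :
    atTop.limsup (fun k => sampleDist n (P k) F) ≤ sampleDist n Q F := by
  classical
  have key : ∀ δ : ℝ, 0 < δ →
      atTop.limsup (fun k => sampleDist n (P k) F) ≤
        sampleDist n Q (Metric.thickening (3*δ) F) := by
    intro δ hδ
    obtain ⟨t, ht, hQt⟩ := exists_cuts Q hδ
    set I : Set (Fin n → Fin l → ℤ) := {J | (MBox n l t J ∩ F).Nonempty} with hI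
    set U : Set (Fin n → Fin l → ℝ) := ⋃ J ∈ I, MBox n l t J with hU
    have hUmble : MeasurableSet U :=
      MeasurableSet.biUnion (Set.to_countable I) (fun J _ => MBox_measurable J)
    have hVmble : MeasurableSet (⋃ J ∈ Iᶜ, MBox n l t J) :=
      MeasurableSet.biUnion (Set.to_countable Iᶜ) (fun J _ => MBox_measurable J)
    have hFU : F ⊆ U := by
      intro z hz
      obtain ⟨J, hJ⟩ := MBox_cover hδ ht z
      exact Set.mem_biUnion (⟨z, hJ, hz⟩ : (MBox n l t J ∩ F).Nonempty) hJ
    have hUthick : U ⊆ Metric.thickening (3*δ) F := by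
      intro z hz
      rw [hU, Set.mem_iUnion₂] at hz
      obtain ⟨J, hJI, hzJ⟩ := hz
      obtain ⟨y, hyJ, hyF⟩ := hJI
      rw [Metric.mem_thickening_iff]
      exact ⟨y, hyF, lt_of_le_of_lt (MBox_dist hδ ht hzJ hyJ) (by linarith)⟩
    have hUc : Uᶜ = ⋃ J ∈ Iᶜ, MBox n l t J := by
      ext z
      simp only [Set.mem_compl_iff, hU, Set.mem_iUnion₂, not_exists]
      constructor
      · intro hz
        obtain ⟨J, hJ⟩ := MBox_cover hδ ht z
        exact ⟨J, fun hJI => hz J hJI hJ, hJ⟩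
      · rintro ⟨J, hJni, hzJ⟩ J' hJ'I hzJ'
        have hJJ' : J = J' := by
          by_contra hne
          exact Set.disjoint_left.mp (MBox_disjoint hδ ht hne) hzJ hzJ'
        exact hJni (hJJ' ▸ hJ'I)
    -- lower bound for liminf of complements
    have hlower : ∀ (R : ℕ → ProbabilityMeasure (Fin l → ℝ)),
        True := fun _ => trivial
    have htsum : ∀ (R : ProbabilityMeasure (Fin l → ℝ)),
        sampleDist n R Uᶜ = ∑' (J : ↥Iᶜ), sampleDist n R (MBox n l t (J : Fin n → Fin l → ℤ)) := by
      intro R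
      rw [hUc]
      exact measure_biUnion (Set.to_countable Iᶜ)
        (fun J _ J' _ hne => MBox_disjoint hδ ht hne) (fun J _ => MBox_measurable J)
    have hliminf : sampleDist n Q Uᶜ ≤ atTop.liminf fun k => sampleDist n (P k) Uᶜ := by
      rw [htsum Q, ENNReal.tsum_eq_iSup_sum]
      apply iSup_le
      intro s
      have hsum_tendsto : Tendsto (fun k => ∑ J ∈ s, sampleDist n (P k) (MBox n l t (J : Fin n → Fin l → ℤ)))
          atTop (𝓝 (∑ J ∈ s, sampleDist n Q (MBox n l t (J : Fin n → Fin l → ℤ)))) :=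
        tendsto_finset_sum _ fun J _ => tendsto_sampleDist_MBox hP hQt _
      have hle : ∀ k, ∑ J ∈ s, sampleDist n (P k) (MBox n l t (J : Fin n → Fin l → ℤ)) ≤
          sampleDist n (P k) Uᶜ := by
        intro k
        rw [htsum (P k)]
        exact ENNReal.sum_le_tsum s
      calc ∑ J ∈ s, sampleDist n Q (MBox n l t (J : Fin n → Fin l → ℤ))
          = atTop.liminf (fun k => ∑ J ∈ s, sampleDist n (P k) (MBox n l t (J : Fin n → Fin l → ℤ))) :=
            (hsum_tendsto.liminf_eq).symm
        _ ≤ atTop.liminf fun k => sampleDist n (P k) Uᶜ :=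
            liminf_le_liminf (Eventually.of_forall hle)
    -- main chain
    have hcompl : ∀ (R : ProbabilityMeasure (Fin l → ℝ)),
        sampleDist n R U = 1 - sampleDist n R Uᶜ := by
      intro R
      have := prob_compl_eq_one_sub (μ := sampleDist n R) hUmble
      have h2 : sampleDist n R U = 1 - (1 - sampleDist n R U) := by
        rw [ENNReal.sub_sub_cancel ENNReal.one_ne_top (prob_le_one)]
      rw [h2, this]
    calc atTop.limsup (fun k => sampleDist n (P k) F)
        ≤ atTop.limsup (fun k => sampleDist n (P k) U) :=
          limsup_le_limsup (Eventually.of_forall fun k => measure_mono hFU)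
      _ = atTop.limsup (fun k => 1 - sampleDist n (P k) Uᶜ) := by
          simp only [hcompl]
      _ = 1 - atTop.liminf (fun k => sampleDist n (P k) Uᶜ) :=
          ENNReal.limsup_const_sub atTop _ ENNReal.one_ne_top
      _ ≤ 1 - sampleDist n Q Uᶜ := tsub_le_tsub_left hliminf 1
      _ = sampleDist n Q U := (hcompl Q).symm
      _ ≤ sampleDist n Q (Metric.thickening (3*δ) F) := measure_mono hUthick
  have hth : Tendsto (fun r => sampleDist n Q (Metric.thickening r F)) (𝓝[>] (0:ℝ))
      (𝓝 (sampleDist n Q F)) :=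
    tendsto_measure_thickening_of_isClosed ⟨1, one_pos, measure_ne_top _ _⟩ hF
  apply ge_of_tendsto hth
  filter_upwards [self_mem_nhdsWithin] with r hr
  have hr3 : (0:ℝ) < r/3 := by
    simp only [Set.mem_Ioi] at hr; linarith
  have h33 : 3 * (r/3) = r := by ring
  have := key (r/3) hr3
  rwa [h33] at this

end W4

section W5
variable {l n : ℕ}

noncomputable def pp (n : ℕ) {l : ℕ} (P : ProbabilityMeasure (Fin l → ℝ)) :
    ProbabilityMeasure (Fin n → Fin l → ℝ) := ⟨sampleDist n P, inferInstance⟩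

lemma pp_toMeasure (P : ProbabilityMeasure (Fin l → ℝ)) :
    (pp n P : Measure (Fin n → Fin l → ℝ)) = sampleDist n P := rfl

lemma pp_tendsto {P : ℕ → ProbabilityMeasure (Fin l → ℝ)} {Q : ProbabilityMeasure (Fin l → ℝ)}
    (hP : Tendsto P atTop (𝓝 Q)) :
    Tendsto (fun k => pp n (P k)) atTop (𝓝 (pp n Q)) := by
  apply tendsto_of_forall_isOpen_le_liminf
  intro G hG
  have h_closed : ∀ F, IsClosed F →
      atTop.limsup (fun k => (pp n (P k) : Measure (Fin n → Fin l → ℝ)) F) ≤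
        (pp n Q : Measure (Fin n → Fin l → ℝ)) F := by
    intro F hF
    simpa only [pp_toMeasure] using limsup_closed_le hP hF
  have h_open := (limsup_measure_closed_le_iff_liminf_measure_open_ge
    (μ := (pp n Q : Measure (Fin n → Fin l → ℝ)))
    (μs := fun k => (pp n (P k) : Measure (Fin n → Fin l → ℝ)))).mp h_closed G hG
  have aux : (ENNReal.ofNNReal (atTop.liminf (fun k => pp n (P k) G))) =
      atTop.liminf (fun k => ((pp n (P k) G : ℝ≥0) : ℝ≥0∞)) := by
    refine Monotone.map_liminf_of_continuousAt (F := atTop) ENNReal.coe_mono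
      (fun k => pp n (P k) G) ?_ ?_ ?_
    · exact ENNReal.continuous_coe.continuousAt
    · exact IsBoundedUnder.isCoboundedUnder_ge ⟨1, by simp⟩
    · exact ⟨0, by simp⟩
  have hfinal : ((pp n Q G : ℝ≥0) : ℝ≥0∞) ≤
      ((atTop.liminf (fun k => pp n (P k) G) : ℝ≥0) : ℝ≥0∞) := by
    rw [aux]
    simpa only [ProbabilityMeasure.ennreal_coeFn_eq_coeFn_toMeasure] using h_open
  exact_mod_cast hfinal

end W5

section W6
variable {l n : ℕ}

lemma frontier_le_level (φ : (Fin n → Fin l → ℝ) → ℝ) (t : ℝ) :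
    frontier {a | t ≤ φ a} ⊆ {z | ¬ ContinuousAt φ z} ∪ {a | φ a = t} := by
  intro x hx
  by_cases hc : ContinuousAt φ x
  · right
    by_contra hne
    rcases lt_or_gt_of_ne hne with h | h
    · -- φ x < t : x in interior of complement
      have hU : φ ⁻¹' (Set.Iio t) ∈ 𝓝 x := hc.preimage_mem_nhds (Iio_mem_nhds h)
      have hsub : φ ⁻¹' (Set.Iio t) ⊆ {a | t ≤ φ a}ᶜ := fun y hy => by
        simp only [Set.mem_compl_iff, Set.mem_setOf_eq, not_le]
        exact hy
      have hint : x ∈ interior ({a | t ≤ φ a}ᶜ) :=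
        mem_interior_iff_mem_nhds.mpr (Filter.mem_of_superset hU hsub)
      rw [interior_compl] at hint
      exact hint hx.1
    · -- φ x > t : x in interior
      have hU : φ ⁻¹' (Set.Ioi t) ∈ 𝓝 x := hc.preimage_mem_nhds (Ioi_mem_nhds h)
      have hsub : φ ⁻¹' (Set.Ioi t) ⊆ {a | t ≤ φ a} := fun y hy => Set.mem_setOf_eq ▸ le_of_lt hy
      have hint : x ∈ interior {a | t ≤ φ a} :=
        mem_interior_iff_mem_nhds.mpr (Filter.mem_of_superset hU hsub)
      exact hx.2 hint
  · exact Or.inl hc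

lemma integrable_test (ν : Measure (Fin n → Fin l → ℝ)) [IsProbabilityMeasure ν]
    {φ : (Fin n → Fin l → ℝ) → ℝ} (hmeas : Measurable φ)
    (hrange : ∀ z, φ z ∈ Set.Icc (0:ℝ) 1) : Integrable φ ν := by
  refine Integrable.mono' (integrable_const 1) hmeas.aestronglyMeasurable
    (Eventually.of_forall fun z => ?_)
  rw [Real.norm_eq_abs, abs_le]
  exact ⟨by linarith [(hrange z).1], (hrange z).2⟩

lemma layercake_test (ν : Measure (Fin n → Fin l → ℝ)) [IsProbabilityMeasure ν]
    {φ : (Fin n → Fin l → ℝ) → ℝ} (hmeas : Measurable φ)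
    (hrange : ∀ z, φ z ∈ Set.Icc (0:ℝ) 1) :
    ∫ z, φ z ∂ν = ∫ t in Set.Ioc (0:ℝ) 1, ENNReal.toReal (ν {a | t ≤ φ a}) := by
  exact (integrable_test ν hmeas hrange).integral_eq_integral_Ioc_meas_le
    (Eventually.of_forall fun z => (hrange z).1) (Eventually.of_forall fun z => (hrange z).2)

lemma tendsto_integral_test {μs : ℕ → ProbabilityMeasure (Fin n → Fin l → ℝ)}
    {μ : ProbabilityMeasure (Fin n → Fin l → ℝ)}
    (hμ : Tendsto μs atTop (𝓝 μ)) {φ : (Fin n → Fin l → ℝ) → ℝ} (hmeas : Measurable φ)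
    (hrange : ∀ z, φ z ∈ Set.Icc (0:ℝ) 1)
    (hcont : (μ : Measure (Fin n → Fin l → ℝ)) {z | ¬ ContinuousAt φ z} = 0) :
    Tendsto (fun k => ∫ z, φ z ∂(μs k : Measure (Fin n → Fin l → ℝ))) atTop
      (𝓝 (∫ z, φ z ∂(μ : Measure (Fin n → Fin l → ℝ)))) := by
  have hlc : ∀ k, ∫ z, φ z ∂(μs k : Measure (Fin n → Fin l → ℝ)) =
      ∫ t in Set.Ioc (0:ℝ) 1, ENNReal.toReal ((μs k : Measure (Fin n → Fin l → ℝ)) {a | t ≤ φ a}) :=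
    fun k => layercake_test _ hmeas hrange
  rw [layercake_test _ hmeas hrange]
  simp only [hlc]
  -- dominated convergence
  set B : Set ℝ := {c : ℝ | 0 < (μ : Measure (Fin n → Fin l → ℝ)) {a | φ a = c}} with hB
  have hBc : B.Countable := Measure.countable_meas_level_set_pos hmeas
  have hBnull : (volume.restrict (Set.Ioc (0:ℝ) 1)) B = 0 :=
    measure_mono_null (fun x hx => hx) (le_antisymm
      (le_trans (Measure.restrict_le_self B) (le_of_eq (Set.Countable.measure_zero hBc _)))
      (zero_le))
  have hlim : ∀ᵐ t ∂(volume.restrict (Set.Ioc (0:ℝ) 1)),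
      Tendsto (fun k => ENNReal.toReal ((μs k : Measure (Fin n → Fin l → ℝ)) {a | t ≤ φ a})) atTop
        (𝓝 (ENNReal.toReal ((μ : Measure (Fin n → Fin l → ℝ)) {a | t ≤ φ a}))) := by
    rw [ae_iff]
    apply measure_mono_null _ hBnull
    intro t ht
    simp only [Set.mem_setOf_eq] at ht ⊢
    by_contra htB
    apply ht
    have hnull : (μ : Measure (Fin n → Fin l → ℝ)) (frontier {a | t ≤ φ a}) = 0 := by
      apply measure_mono_null (frontier_le_level φ t)
      apply measure_union_null hcont
      simpa [hB, not_lt, le_zero_iff] using htB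
    have key := ProbabilityMeasure.tendsto_measure_of_null_frontier_of_tendsto' hμ hnull
    exact (ENNReal.tendsto_toReal (measure_ne_top _ _)).comp key
  apply tendsto_integral_of_dominated_convergence (fun _ => (1:ℝ)) ?_ ?_ ?_ hlim
  · intro k
    apply Measurable.aestronglyMeasurable
    apply Antitone.measurable
    intro t s hts
    apply ENNReal.toReal_mono (measure_ne_top _ _)
    exact measure_mono fun a ha => le_trans hts ha
  · exact (integrableOn_const_iff).mpr (Or.inr (by simp [Real.volume_Ioc]))
  · intro k
    apply Eventually.of_forall
    intro t
    rw [Real.norm_eq_abs, abs_of_nonneg ENNReal.toReal_nonneg]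
    exact le_trans (ENNReal.toReal_mono ENNReal.one_ne_top prob_le_one) (by norm_num)

end W6

/-- `E_P[φ]`, the rejection probability of the test `φ` under `P^{⊗n}`. -/
noncomputable def tpower (n : ℕ) {E : Type*} [MeasurableSpace E]
    (P : ProbabilityMeasure E) (φ : (Fin n → E) → ℝ) : ℝ :=
  ∫ z, φ z ∂ sampleDist n P

/-- A test is a measurable function with values in `[0,1]`. -/
def IsTest {E : Type*} [MeasurableSpace E] (φ : E → ℝ) : Prop :=
  Measurable φ ∧ ∀ z, φ z ∈ Set.Icc (0:ℝ) 1

/-- `φ` is almost-surely continuous under `Q` (i.e. under `Q^{⊗n}`). -/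
def ASCont {E : Type*} [MeasurableSpace E] [TopologicalSpace E] (n : ℕ)
    (Q : ProbabilityMeasure E) (φ : (Fin n → E) → ℝ) : Prop :=
  sampleDist n Q {z | ¬ ContinuousAt φ z} = 0

/-- Convergence in distribution: integrals of every bounded continuous function converge. -/
def ConvDM {E : Type*} [MeasurableSpace E] [TopologicalSpace E]
    (P : ℕ → Measure E) (Q : Measure E) : Prop :=
  ∀ g : E → ℝ, Continuous g → (∃ C, ∀ x, |g x| ≤ C) →
    Tendsto (fun k => ∫ x, g x ∂ P k) atTop (nhds (∫ x, g x ∂ Q))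


section W7
variable {l n : ℕ}

lemma tpower_tendsto {P : ℕ → ProbabilityMeasure (Fin l → ℝ)} {Q : ProbabilityMeasure (Fin l → ℝ)}
    (h : ConvDM (fun k => (P k : Measure (Fin l → ℝ))) (Q : Measure (Fin l → ℝ)))
    {φ : (Fin n → Fin l → ℝ) → ℝ} (hφ : IsTest φ) (hQ : ASCont n Q φ) :
    Tendsto (fun k => tpower n (P k) φ) atTop (𝓝 (tpower n Q φ)) := by
  have hPt : Tendsto P atTop (𝓝 Q) := marginal_tendsto h
  have key := tendsto_integral_test (pp_tendsto (n := n) hPt) hφ.1 hφ.2 hQ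
  exact key

lemma tpower_mem (P : ProbabilityMeasure (Fin l → ℝ)) {φ : (Fin n → Fin l → ℝ) → ℝ}
    (hφ : IsTest φ) : tpower n P φ ∈ Set.Icc (0:ℝ) 1 := by
  constructor
  · exact integral_nonneg fun z => (hφ.2 z).1
  · calc ∫ z, φ z ∂ sampleDist n P
        ≤ ∫ _z, (1:ℝ) ∂ sampleDist n P :=
          integral_mono (integrable_test _ hφ.1 hφ.2) (integrable_const 1) (fun z => (hφ.2 z).2)
      _ = 1 := by simp

end W7

/-- Remark 4: if `𝒫₁` is indistinguishable from `𝒫₀` and vice versa in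
the weak distance, then every test a.s. continuous under every distribution in `𝒫₀ ∪ 𝒫₁`
has power equal to size. -/
theorem power_equals_size_of_bidirectional_indistinguishable (l n : ℕ) (hl : 1 ≤ l) (hn : 1 ≤ n)
    (𝒫₀ 𝒫₁ : Set (ProbabilityMeasure (Fin l → ℝ)))
    (hindist₁ : ∀ Q ∈ 𝒫₁, ∃ P : ℕ → ProbabilityMeasure (Fin l → ℝ), (∀ k, P k ∈ 𝒫₀) ∧
      ConvDM (fun k => (P k : Measure (Fin l → ℝ))) (Q : Measure (Fin l → ℝ)))
    (hindist₀ : ∀ P ∈ 𝒫₀, ∃ Q : ℕ → ProbabilityMeasure (Fin l → ℝ), (∀ k, Q k ∈ 𝒫₁) ∧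
      ConvDM (fun k => (Q k : Measure (Fin l → ℝ))) (P : Measure (Fin l → ℝ)))
    (φ : (Fin n → Fin l → ℝ) → ℝ) (hφ : IsTest φ)
    (hcont : ∀ Q ∈ 𝒫₀ ∪ 𝒫₁, ASCont n Q φ) :
    sSup ((fun Q => tpower n Q φ) '' 𝒫₁) = sSup ((fun P => tpower n P φ) '' 𝒫₀) := by
  classical
  by_cases h1 : 𝒫₁.Nonempty
  · have h0 : 𝒫₀.Nonempty := by
      obtain ⟨Q, hQ⟩ := h1
      obtain ⟨Ps, hPs, _⟩ := hindist₁ Q hQ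
      exact ⟨Ps 0, hPs 0⟩
    have bdd0 : BddAbove ((fun P => tpower n P φ) '' 𝒫₀) := by
      refine ⟨1, ?_⟩
      rintro x ⟨P, _, rfl⟩
      exact (tpower_mem P hφ).2
    have bdd1 : BddAbove ((fun Q => tpower n Q φ) '' 𝒫₁) := by
      refine ⟨1, ?_⟩
      rintro x ⟨P, _, rfl⟩
      exact (tpower_mem P hφ).2
    apply le_antisymm
    · apply csSup_le (h1.image _)
      rintro x ⟨Q, hQ, rfl⟩
      obtain ⟨Ps, hPs, hconv⟩ := hindist₁ Q hQ
      have ht := tpower_tendsto hconv hφ (hcont Q (Or.inr hQ))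
      apply le_of_tendsto ht
      exact Eventually.of_forall fun k => le_csSup bdd0 ⟨Ps k, hPs k, rfl⟩
    · apply csSup_le (h0.image _)
      rintro x ⟨P, hP, rfl⟩
      obtain ⟨Qs, hQs, hconv⟩ := hindist₀ P hP
      have ht := tpower_tendsto hconv hφ (hcont P (Or.inl hP))
      apply le_of_tendsto ht
      exact Eventually.of_forall fun k => le_csSup bdd1 ⟨Qs k, hQs k, rfl⟩
  · have h0 : 𝒫₀ = ∅ := by
      ext P
      simp only [Set.mem_empty_iff_false, iff_false]
      intro hP
      obtain ⟨Qs, hQs, _⟩ := hindist₀ P hP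
      exact h1 ⟨Qs 0, hQs 0⟩
    rw [Set.not_nonempty_iff_eq_empty] at h1
    rw [h0, h1]
end

section
/- Suppose that for every m ∈ μ(𝒫), 𝒫₁(m) is indistinguishable from 𝒫₀(m) in the weak distance and the test φ_m is a.s. continuous under every Q ∈ 𝒫₁(m), and μ(𝒫) is an unbounded subset of ℝ. If the confidence set C(Z) = {m : φ_m(Z)=0} is almost-surely bounded under some distribution P* ∈ 𝒫, then C has zero confidence level, i.e., inf_{P∈𝒫} P^{⊗n}(μ(P) ∈ C(Z)) = 0; equivalently, sup_{m∈μ(𝒫)} sup_{P∈𝒫₀(m)} E_P[φ_m] = 1, so there exist m for which the size of φ_m is arbitrarily close to one. -/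
open MeasureTheory Filter

open scoped ENNReal NNReal

section Aux

open Set Metric

variable {l n : ℕ}

instance sampleDist_prob {n : ℕ} {E : Type*} [MeasurableSpace E] (P : ProbabilityMeasure E) :
    IsProbabilityMeasure (sampleDist n P) := by
  unfold sampleDist; infer_instance

/-- A "good box": product of open sets with `Q`-null frontiers. -/
def GoodBox (n : ℕ) {l : ℕ} (Q : ProbabilityMeasure (Fin l → ℝ))
    (B : Set (Fin n → Fin l → ℝ)) : Prop :=
  ∃ U : Fin n → Set (Fin l → ℝ), (∀ j, IsOpen (U j)) ∧
    (∀ j, (Q : Measure (Fin l → ℝ)) (frontier (U j)) = 0) ∧ B = Set.pi Set.univ U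

lemma GoodBox.isOpen {Q : ProbabilityMeasure (Fin l → ℝ)} {B : Set (Fin n → Fin l → ℝ)}
    (hB : GoodBox n Q B) : IsOpen B := by
  obtain ⟨U, hU, -, rfl⟩ := hB
  exact isOpen_set_pi Set.finite_univ fun j _ => hU j

lemma GoodBox.inter {Q : ProbabilityMeasure (Fin l → ℝ)} {B B' : Set (Fin n → Fin l → ℝ)}
    (hB : GoodBox n Q B) (hB' : GoodBox n Q B') : GoodBox n Q (B ∩ B') := by
  obtain ⟨U, hU, hUf, rfl⟩ := hB
  obtain ⟨V, hV, hVf, rfl⟩ := hB'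
  refine ⟨fun j => U j ∩ V j, fun j => (hU j).inter (hV j), fun j => ?_,
    by rw [Set.pi_inter_distrib]⟩
  have hsub : frontier (U j ∩ V j) ⊆ frontier (U j) ∪ frontier (V j) :=
    (frontier_inter_subset _ _).trans
      (Set.union_subset_union Set.inter_subset_left Set.inter_subset_right)
  exact measure_mono_null hsub (measure_union_null (hUf j) (hVf j))

lemma goodBox_tendsto {P : ℕ → ProbabilityMeasure (Fin l → ℝ)} {Q : ProbabilityMeasure (Fin l → ℝ)}
    (hPQ : Tendsto P atTop (nhds Q)) {B : Set (Fin n → Fin l → ℝ)} (hB : GoodBox n Q B) :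
    Tendsto (fun k => (sampleDist n (P k) B).toReal) atTop (nhds ((sampleDist n Q B).toReal)) := by
  obtain ⟨U, -, hUf, rfl⟩ := hB
  have hval : ∀ R : ProbabilityMeasure (Fin l → ℝ),
      (sampleDist n R (Set.pi Set.univ U)).toReal
        = ∏ j, ((R : Measure (Fin l → ℝ)) (U j)).toReal := by
    intro R
    unfold sampleDist
    rw [Measure.pi_pi, ENNReal.toReal_prod]
  simp only [hval]
  apply tendsto_finset_prod
  intro j _
  have h1 := ProbabilityMeasure.tendsto_measure_of_null_frontier_of_tendsto' hPQ (hUf j)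
  exact (ENNReal.tendsto_toReal (measure_ne_top _ _)).comp h1

lemma goodBoxes_union_tendsto {P : ℕ → ProbabilityMeasure (Fin l → ℝ)}
    {Q : ProbabilityMeasure (Fin l → ℝ)} (hPQ : Tendsto P atTop (nhds Q)) :
    ∀ (N : ℕ) (B : Fin N → Set (Fin n → Fin l → ℝ)), (∀ i, GoodBox n Q (B i)) →
      Tendsto (fun k => (sampleDist n (P k) (⋃ i, B i)).toReal) atTop
        (nhds ((sampleDist n Q (⋃ i, B i)).toReal)) := by
  intro N
  induction N with
  | zero =>
      intro B _
      simp only [Set.iUnion_of_empty, measure_empty, ENNReal.toReal_zero]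
      exact tendsto_const_nhds
  | succ N ih =>
      intro B hB
      have hsplit : (⋃ i, B i) = (⋃ i : Fin N, B i.castSucc) ∪ B (Fin.last N) := by
        ext z
        simp only [Set.mem_iUnion, Set.mem_union]
        constructor
        · rintro ⟨i, hi⟩
          induction i using Fin.lastCases with
          | last => exact Or.inr hi
          | cast i => exact Or.inl ⟨i, hi⟩
        · rintro (⟨i, hi⟩ | h)
          exacts [⟨i.castSucc, hi⟩, ⟨Fin.last N, h⟩]
      have hYm : MeasurableSet (B (Fin.last N)) := (hB _).isOpen.measurableSet
      have key : ∀ R : ProbabilityMeasure (Fin l → ℝ),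
          (sampleDist n R ((⋃ i : Fin N, B i.castSucc) ∪ B (Fin.last N))).toReal
            = (sampleDist n R (⋃ i : Fin N, B i.castSucc)).toReal
              + (sampleDist n R (B (Fin.last N))).toReal
              - (sampleDist n R (⋃ i : Fin N, B i.castSucc ∩ B (Fin.last N))).toReal := by
        intro R
        have h1 : sampleDist n R ((⋃ i : Fin N, B i.castSucc) ∪ B (Fin.last N))
              + sampleDist n R ((⋃ i : Fin N, B i.castSucc) ∩ B (Fin.last N))
            = sampleDist n R (⋃ i : Fin N, B i.castSucc) + sampleDist n R (B (Fin.last N)) :=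
          measure_union_add_inter _ hYm
        have h2 : (⋃ i : Fin N, B i.castSucc) ∩ B (Fin.last N)
            = ⋃ i : Fin N, B i.castSucc ∩ B (Fin.last N) := Set.iUnion_inter _ _
        rw [h2] at h1
        have h3 := congrArg ENNReal.toReal h1
        rw [ENNReal.toReal_add (measure_ne_top _ _) (measure_ne_top _ _),
            ENNReal.toReal_add (measure_ne_top _ _) (measure_ne_top _ _)] at h3
        linarith
      simp only [hsplit, key]
      have hX := ih (fun i => B i.castSucc) (fun i => hB _)
      have hY := goodBox_tendsto hPQ (hB (Fin.last N))
      have hXY := ih (fun i => B i.castSucc ∩ B (Fin.last N)) (fun i => (hB _).inter (hB _))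
      exact (hX.add hY).sub hXY

lemma exists_goodBox (Q : ProbabilityMeasure (Fin l → ℝ)) {G : Set (Fin n → Fin l → ℝ)}
    (hG : IsOpen G) {z : Fin n → Fin l → ℝ} (hz : z ∈ G) :
    ∃ B, GoodBox n Q B ∧ z ∈ B ∧ B ⊆ G := by
  obtain ⟨ε, hε, hball⟩ := Metric.isOpen_iff.1 hG z hz
  set bad : Set ℝ :=
    ⋃ j : Fin n, {r : ℝ | 0 < (Q : Measure (Fin l → ℝ)) (frontier (Metric.thickening r {z j}))}
    with hbad
  have hbadc : bad.Countable := Set.countable_iUnion fun j =>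
    Measure.countable_meas_pos_of_disjoint_iUnion
      (fun r => isClosed_frontier.measurableSet)
      (Metric.frontier_thickening_disjoint _)
  have hvol : volume (Set.Ioo (0:ℝ) ε \ bad) ≠ 0 := by
    rw [measure_diff_null (hbadc.measure_zero volume)]
    simp [hε, ne_of_gt]
  obtain ⟨r, hrIoo, hrbad⟩ := nonempty_of_measure_ne_zero hvol
  obtain ⟨hr0, hrε⟩ := hrIoo
  have hfr : ∀ j : Fin n, (Q : Measure (Fin l → ℝ)) (frontier (Metric.ball (z j) r)) = 0 := by
    intro j
    have : r ∉ {r : ℝ | 0 < (Q : Measure (Fin l → ℝ))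
        (frontier (Metric.thickening r {z j}))} := fun h => hrbad (Set.mem_iUnion.2 ⟨j, h⟩)
    simp only [Set.mem_setOf_eq, not_lt, le_zero_iff] at this
    rwa [Metric.thickening_singleton] at this
  refine ⟨Set.pi Set.univ fun j => Metric.ball (z j) r,
    ⟨fun j => Metric.ball (z j) r, fun j => Metric.isOpen_ball, hfr, rfl⟩, ?_, ?_⟩
  · exact fun j _ => Metric.mem_ball_self hr0
  · rw [← ball_pi z hr0]
    exact (Metric.ball_subset_ball hrε.le).trans hball

lemma pi_tendsto_of_null_frontier {P : ℕ → ProbabilityMeasure (Fin l → ℝ)}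
    {Q : ProbabilityMeasure (Fin l → ℝ)} (hPQ : Tendsto P atTop (nhds Q))
    {S : Set (Fin n → Fin l → ℝ)} (hS : sampleDist n Q (frontier S) = 0) :
    Tendsto (fun k => (sampleDist n (P k) S).toReal) atTop (nhds ((sampleDist n Q S).toReal)) := by
  set Pn : ℕ → ProbabilityMeasure (Fin n → Fin l → ℝ) :=
    fun k => ⟨sampleDist n (P k), inferInstance⟩ with hPn
  set Qn : ProbabilityMeasure (Fin n → Fin l → ℝ) := ⟨sampleDist n Q, inferInstance⟩ with hQn
  have main : Tendsto Pn atTop (nhds Qn) := by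
    apply tendsto_of_forall_isOpen_le_liminf
    intro G hGopen
    have hcov : ∀ z : G, ∃ B, GoodBox n Q B ∧ (z : Fin n → Fin l → ℝ) ∈ B ∧ B ⊆ G :=
      fun z => exists_goodBox Q hGopen z.2
    choose B hGood hmem hsub using hcov
    have hunion : ⋃ z : G, B z = G :=
      subset_antisymm (Set.iUnion_subset fun z => hsub z)
        (fun x hx => Set.mem_iUnion.2 ⟨⟨x, hx⟩, hmem ⟨x, hx⟩⟩)
    obtain ⟨T, hTc, hTU⟩ := TopologicalSpace.isOpen_iUnion_countable B fun z => (hGood z).isOpen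
    rcases T.eq_empty_or_nonempty with rfl | hTne
    · have hGemp : G = ∅ := by
        rw [← hunion, ← hTU]; simp
      simp [hGemp]
    obtain ⟨e, he⟩ := hTc.exists_eq_range hTne
    set C : ℕ → Set (Fin n → Fin l → ℝ) := fun N => ⋃ i : Fin N, B (e ↑i) with hC
    have hCG : ∀ N, C N ⊆ G := fun N => Set.iUnion_subset fun i => hsub _
    have hCmono : Monotone C := fun N M hNM => Set.iUnion_subset fun i =>
      Set.subset_iUnion (fun j : Fin M => B (e ↑j)) ⟨i.1, lt_of_lt_of_le i.2 hNM⟩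
    have hCunion : ⋃ N, C N = G := by
      have h1 : ⋃ N, C N = ⋃ i : ℕ, B (e i) := by
        ext x
        simp only [hC, Set.mem_iUnion]
        exact ⟨fun ⟨N, i, hi⟩ => ⟨↑i, hi⟩, fun ⟨i, hi⟩ => ⟨i + 1, ⟨i, Nat.lt_succ_self i⟩, hi⟩⟩
      rw [h1, ← Set.biUnion_range, ← he, hTU, hunion]
    have hsup : (Qn : Measure (Fin n → Fin l → ℝ)) G
        = ⨆ N, (Qn : Measure (Fin n → Fin l → ℝ)) (C N) := by
      rw [← hCunion]; exact hCmono.measure_iUnion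
    have hkey : ∀ N, (Qn : Measure (Fin n → Fin l → ℝ)) (C N)
        ≤ atTop.liminf fun k => (Pn k : Measure (Fin n → Fin l → ℝ)) G := by
      intro N
      have ht := goodBoxes_union_tendsto hPQ N (fun i : Fin N => B (e ↑i)) (fun i => hGood _)
      have ht' : Tendsto (fun k => (Pn k : Measure (Fin n → Fin l → ℝ)) (C N)) atTop
          (nhds ((Qn : Measure (Fin n → Fin l → ℝ)) (C N))) := by
        rw [← ENNReal.tendsto_toReal_iff (fun k => measure_ne_top _ _) (measure_ne_top _ _)]
        exact ht
      calc (Qn : Measure (Fin n → Fin l → ℝ)) (C N)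
          = atTop.liminf fun k => (Pn k : Measure (Fin n → Fin l → ℝ)) (C N) :=
            ht'.liminf_eq.symm
        _ ≤ atTop.liminf fun k => (Pn k : Measure (Fin n → Fin l → ℝ)) G :=
            liminf_le_liminf (Eventually.of_forall fun k => measure_mono (hCG N))
    have hENN : (Qn : Measure (Fin n → Fin l → ℝ)) G
        ≤ atTop.liminf fun k => (Pn k : Measure (Fin n → Fin l → ℝ)) G := by
      rw [hsup]; exact iSup_le hkey
    have aux : ENNReal.ofNNReal (atTop.liminf fun k => Pn k G) =
        atTop.liminf (ENNReal.ofNNReal ∘ fun k => Pn k G) := by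
      refine Monotone.map_liminf_of_continuousAt (F := atTop) ENNReal.coe_mono
        (fun k => Pn k G) ?_ ?_ ?_
      · exact ENNReal.continuous_coe.continuousAt
      · exact IsBoundedUnder.isCoboundedUnder_ge ⟨1, by simp⟩
      · exact ⟨0, by simp⟩
    rw [← ENNReal.coe_le_coe, aux]
    simp only [Function.comp_def, ProbabilityMeasure.ennreal_coeFn_eq_coeFn_toMeasure]
    exact hENN
  have h2 := ProbabilityMeasure.tendsto_measure_of_null_frontier_of_tendsto' main hS
  exact (ENNReal.tendsto_toReal (measure_ne_top _ _)).comp h2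

lemma tendsto_of_convDM {P : ℕ → ProbabilityMeasure (Fin l → ℝ)}
    {Q : ProbabilityMeasure (Fin l → ℝ)}
    (h : ConvDM (fun k => (P k : Measure (Fin l → ℝ))) (Q : Measure (Fin l → ℝ))) :
    Tendsto P atTop (nhds Q) :=
  ProbabilityMeasure.tendsto_iff_forall_integral_tendsto.mpr fun f =>
    h f f.continuous ⟨‖f‖, fun x => by
      simpa [Real.norm_eq_abs] using f.norm_coe_le_norm x⟩

lemma frontier_subset_discont {Ω : Type*} [TopologicalSpace Ω] {φ0 : Ω → ℝ}
    (h01 : ∀ z, φ0 z = 0 ∨ φ0 z = 1) :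
    frontier {z | φ0 z = 0} ⊆ {z | ¬ ContinuousAt φ0 z} := by
  intro z hz
  simp only [Set.mem_setOf_eq]
  intro hc
  have h1 : z ∈ closure {z | φ0 z = 0} := hz.1
  have h2 : z ∈ closure {z | φ0 z = 0}ᶜ := by
    rw [closure_compl]
    exact hz.2
  have hnb : {w | |φ0 w - φ0 z| < 1/2} ∈ nhds z := by
    have := hc (Metric.ball_mem_nhds (φ0 z) (by norm_num : (0:ℝ) < 1/2))
    exact Filter.mem_of_superset this (fun w hw => by simpa [Metric.mem_ball, Real.dist_eq] using hw)
  obtain ⟨w1, hw1t, hw1s⟩ := mem_closure_iff_nhds.1 h1 _ hnb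
  obtain ⟨w2, hw2t, hw2s⟩ := mem_closure_iff_nhds.1 h2 _ hnb
  simp only [Set.mem_setOf_eq] at hw1t hw2t hw1s hw2s
  have e1 : φ0 w1 = 0 := hw1s
  have e2 : φ0 w2 = 1 := (h01 w2).resolve_left hw2s
  rw [e1] at hw1t
  rw [e2] at hw2t
  rcases abs_lt.1 hw1t with ⟨ha, hb⟩
  rcases abs_lt.1 hw2t with ⟨hc', hd⟩
  linarith

lemma tpower_eq_measure {n : ℕ} {E : Type*} [MeasurableSpace E] (P : ProbabilityMeasure E)
    {φ0 : (Fin n → E) → ℝ} (hm : Measurable φ0) (h01 : ∀ z, φ0 z = 0 ∨ φ0 z = 1) :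
    tpower n P φ0 = (sampleDist n P {z | φ0 z = 1}).toReal := by
  have hind : ∀ z, φ0 z = Set.indicator {z | φ0 z = 1} 1 z := by
    intro z
    rcases h01 z with h | h
    · rw [Set.indicator_of_notMem (by simp [Set.mem_setOf_eq, h])]
      exact h
    · rw [Set.indicator_of_mem (show z ∈ {z | φ0 z = 1} from h)]
      simpa using h
  have hms : MeasurableSet {z | φ0 z = 1} := hm (measurableSet_singleton 1)
  rw [tpower, MeasureTheory.integral_congr_ae (MeasureTheory.ae_of_all _ hind),
    MeasureTheory.integral_indicator_one hms]
  rfl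

lemma setone_eq_compl {E : Type*} {φ0 : E → ℝ} (h01 : ∀ z, φ0 z = 0 ∨ φ0 z = 1) :
    {z | φ0 z = 1} = {z | φ0 z = 0}ᶜ := by
  ext z
  simp only [Set.mem_setOf_eq, Set.mem_compl_iff]
  constructor
  · intro h h0
    rw [h0] at h
    norm_num at h
  · intro h
    exact (h01 z).resolve_left h

lemma toReal_compl_meas {n : ℕ} {E : Type*} [MeasurableSpace E] (P : ProbabilityMeasure E)
    {A : Set (Fin n → E)} (hA : MeasurableSet A) :
    (sampleDist n P Aᶜ).toReal = 1 - (sampleDist n P A).toReal := by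
  have h := measure_compl hA (measure_ne_top (sampleDist n P) A)
  rw [h, measure_univ, ENNReal.toReal_sub_of_le prob_le_one ENNReal.one_ne_top,
    ENNReal.toReal_one]

lemma tpower_nonneg_le_one {n : ℕ} {E : Type*} [MeasurableSpace E] (P : ProbabilityMeasure E)
    {φ0 : (Fin n → E) → ℝ} (hm : Measurable φ0) (h01 : ∀ z, φ0 z = 0 ∨ φ0 z = 1) :
    0 ≤ tpower n P φ0 ∧ tpower n P φ0 ≤ 1 := by
  rw [tpower_eq_measure P hm h01]
  constructor
  · exact ENNReal.toReal_nonneg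
  · calc (sampleDist n P {z | φ0 z = 1}).toReal
        ≤ (1 : ℝ≥0∞).toReal := ENNReal.toReal_mono ENNReal.one_ne_top prob_le_one
      _ = 1 := ENNReal.toReal_one

end Aux

/-- Remark 5, contrapositive of Theorem 2: if `μ(𝔓)` is unbounded and
the inverted confidence set is almost-surely bounded under some `P* ∈ 𝔓`, then the
confidence set has zero confidence level, and equivalently the supremum of the sizes of the
tests `φ m` over `m ∈ μ(𝔓)` equals one. -/
theorem as_bounded_confidence_set_has_zero_level (l n : ℕ) (hl : 1 ≤ l) (hn : 1 ≤ n)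
    (𝔓 : Set (ProbabilityMeasure (Fin l → ℝ)))
    (μ : ProbabilityMeasure (Fin l → ℝ) → ℝ)
    (φ : ℝ → (Fin n → Fin l → ℝ) → ℝ)
    (hφ : ∀ m, Measurable (φ m) ∧ ∀ z, φ m z = 0 ∨ φ m z = 1)
    (hindist : ∀ m ∈ μ '' 𝔓, ∀ Q ∈ 𝔓, μ Q ≠ m →
      ∃ P : ℕ → ProbabilityMeasure (Fin l → ℝ), (∀ k, P k ∈ 𝔓 ∧ μ (P k) = m) ∧
        ConvDM (fun k => (P k : Measure (Fin l → ℝ))) (Q : Measure (Fin l → ℝ)))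
    (hcont : ∀ m ∈ μ '' 𝔓, ∀ Q ∈ 𝔓, μ Q ≠ m → ASCont n Q (φ m))
    (hunb : ¬ Bornology.IsBounded (μ '' 𝔓))
    (hbdd : ∃ Pstar ∈ 𝔓,
      sampleDist n Pstar {z | ¬ Bornology.IsBounded {m | m ∈ μ '' 𝔓 ∧ φ m z = 0}} = 0) :
    sInf ((fun P => (sampleDist n P {z | μ P ∈ μ '' 𝔓 ∧ φ (μ P) z = 0}).toReal) '' 𝔓) = 0 ∧
    sSup ((fun m => sSup ((fun P => tpower n P (φ m)) '' {P ∈ 𝔓 | μ P = m}))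
        '' (μ '' 𝔓)) = 1 := by
  obtain ⟨Pstar, hPstar, hbdd0⟩ := hbdd
  -- key construction: for every ε > 0 there are m₀ ∈ μ(𝔓) and P' ∈ 𝔓₀(m₀) with small
  -- acceptance probability (coverage), i.e., large size.
  have construction : ∀ ε : ℝ, 0 < ε → ∃ m0 ∈ μ '' 𝔓, ∃ P', P' ∈ 𝔓 ∧ μ P' = m0 ∧
      (sampleDist n P' {z | φ m0 z = 0}).toReal < ε ∧ 1 - ε < tpower n P' (φ m0) := by
    intro ε hε
    set ν := sampleDist n Pstar with hν
    set T : ℕ → Set (Fin n → Fin l → ℝ) :=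
      fun M => {z | ∀ m', m' ∈ μ '' 𝔓 → φ m' z = 0 → |m'| ≤ M} with hT
    have hTmono : Monotone T := by
      intro M M' hMM' z hz m' hm' h0
      exact (hz m' hm' h0).trans (by exact_mod_cast Nat.cast_le.2 hMM')
    have hsubU : {z | Bornology.IsBounded {m | m ∈ μ '' 𝔓 ∧ φ m z = 0}} ⊆ ⋃ M, T M := by
      intro z hz
      have hzb : Bornology.IsBounded {m | m ∈ μ '' 𝔓 ∧ φ m z = 0} := hz
      obtain ⟨R, hR⟩ := isBounded_iff_forall_norm_le.1 hzb
      refine Set.mem_iUnion.2 ⟨⌈R⌉₊, fun m' hm' h0 => ?_⟩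
      have h1 : ‖m'‖ ≤ R := hR m' ⟨hm', h0⟩
      calc |m'| = ‖m'‖ := (Real.norm_eq_abs m').symm
        _ ≤ R := h1
        _ ≤ (⌈R⌉₊ : ℝ) := Nat.le_ceil R
    have hνU : ν (⋃ M, T M) = 1 := by
      refine le_antisymm prob_le_one ?_
      calc (1 : ℝ≥0∞) = ν Set.univ := measure_univ.symm
        _ = ν (Set.univ \ {z | ¬ Bornology.IsBounded {m | m ∈ μ '' 𝔓 ∧ φ m z = 0}}) :=
            (measure_diff_null hbdd0).symm
        _ ≤ ν (⋃ M, T M) := measure_mono (by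
            intro z hz
            exact hsubU (not_not.1 hz.2))
    have hsupT : ⨆ M, ν (T M) = 1 := by
      rw [← hTmono.measure_iUnion]
      exact hνU
    obtain ⟨M, hM⟩ : ∃ M : ℕ, 1 - ε/2 < (ν (T M)).toReal := by
      by_contra h
      push_neg at h
      have hle : ∀ M, ν (T M) ≤ ENNReal.ofReal (1 - ε/2) := by
        intro M
        rcases le_or_gt 0 (1 - ε/2) with h0 | h0
        · exact (ENNReal.le_ofReal_iff_toReal_le (measure_ne_top _ _) h0).2 (h M)
        · exact absurd (h M) (not_le.2 (lt_of_lt_of_le h0 ENNReal.toReal_nonneg))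
      have hle2 := iSup_le hle
      rw [hsupT] at hle2
      have hlt : ENNReal.ofReal (1 - ε/2) < 1 := ENNReal.ofReal_lt_one.2 (by linarith)
      exact absurd hle2 (not_le.2 hlt)
    obtain ⟨m0, hm0mem, hm0big⟩ : ∃ m0 ∈ μ '' 𝔓, max (M : ℝ) |μ Pstar| < |m0| := by
      rw [isBounded_iff_forall_norm_le] at hunb
      push_neg at hunb
      obtain ⟨m0, hmem, hgt⟩ := hunb (max (M : ℝ) |μ Pstar|)
      exact ⟨m0, hmem, by rwa [Real.norm_eq_abs] at hgt⟩
    have hne : μ Pstar ≠ m0 := by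
      intro h
      have h1 : |μ Pstar| < |m0| := lt_of_le_of_lt (le_max_right _ _) hm0big
      rw [h] at h1
      exact lt_irrefl _ h1
    set A := {z | φ m0 z = 0} with hA
    have hm0meas : Measurable (φ m0) := (hφ m0).1
    have h01 : ∀ z, φ m0 z = 0 ∨ φ m0 z = 1 := (hφ m0).2
    have hAm : MeasurableSet A := hm0meas (measurableSet_singleton 0)
    have hTA : T M ⊆ Aᶜ := by
      intro z hz h0
      have h1 := hz m0 hm0mem h0
      have hMlt : (M : ℝ) < |m0| := lt_of_le_of_lt (le_max_left _ _) hm0big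
      linarith
    have hνA : (ν A).toReal < ε/2 := by
      have h1 : ν (T M) ≤ ν Aᶜ := measure_mono hTA
      have h2 : (ν Aᶜ).toReal = 1 - (ν A).toReal := toReal_compl_meas Pstar hAm
      have h3 : (ν (T M)).toReal ≤ (ν Aᶜ).toReal :=
        ENNReal.toReal_mono (measure_ne_top _ _) h1
      linarith
    obtain ⟨Pk, hPk, hconv⟩ := hindist m0 hm0mem Pstar hPstar hne
    have hPQ : Tendsto Pk atTop (nhds Pstar) := tendsto_of_convDM hconv
    have hdisc : ν {z | ¬ ContinuousAt (φ m0) z} = 0 := hcont m0 hm0mem Pstar hPstar hne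
    have hfr1 : ν (frontier A) = 0 :=
      measure_mono_null (frontier_subset_discont h01) hdisc
    have ht1 : Tendsto (fun k => (sampleDist n (Pk k) A).toReal) atTop
        (nhds ((ν A).toReal)) := pi_tendsto_of_null_frontier hPQ hfr1
    have htpow : ∀ R : ProbabilityMeasure (Fin l → ℝ),
        tpower n R (φ m0) = 1 - (sampleDist n R A).toReal := by
      intro R
      rw [tpower_eq_measure R hm0meas h01, setone_eq_compl h01, toReal_compl_meas R hAm]
    have ht2 : Tendsto (fun k => tpower n (Pk k) (φ m0)) atTop
        (nhds (1 - (ν A).toReal)) := by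
      simp only [htpow]
      exact tendsto_const_nhds.sub ht1
    have hev1 : ∀ᶠ k in atTop, (sampleDist n (Pk k) A).toReal < ε :=
      ht1.eventually_lt_const (by linarith)
    have hev2 : ∀ᶠ k in atTop, 1 - ε < tpower n (Pk k) (φ m0) :=
      ht2.eventually_const_lt (by linarith)
    obtain ⟨k, hk1, hk2⟩ := (hev1.and hev2).exists
    exact ⟨m0, hm0mem, Pk k, (hPk k).1, (hPk k).2, hk1, hk2⟩
  constructor
  · -- the confidence level is zero
    set f : ProbabilityMeasure (Fin l → ℝ) → ℝ :=
      fun P => (sampleDist n P {z | μ P ∈ μ '' 𝔓 ∧ φ (μ P) z = 0}).toReal with hf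
    have hnonneg : ∀ x ∈ f '' 𝔓, 0 ≤ x := by
      rintro x ⟨P, -, rfl⟩
      exact ENNReal.toReal_nonneg
    have hbddbelow : BddBelow (f '' 𝔓) := ⟨0, fun x hx => hnonneg x hx⟩
    refine le_antisymm ?_ (Real.sInf_nonneg hnonneg)
    by_contra hlt
    push_neg at hlt
    obtain ⟨m0, hm0mem, P', hP'mem, hμP', hcov, -⟩ :=
      construction (sInf (f '' 𝔓) / 2) (by linarith)
    have hsetEq : {z | μ P' ∈ μ '' 𝔓 ∧ φ (μ P') z = 0} = {z | φ m0 z = 0} := by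
      ext z
      simp [hμP', hm0mem]
    have hval : f P' < sInf (f '' 𝔓) / 2 := by
      rw [hf]
      simp only [hsetEq]
      exact hcov
    have hge := csInf_le hbddbelow (Set.mem_image_of_mem f hP'mem)
    linarith
  · -- the supremum of the sizes is one
    set S2 : Set ℝ := (fun m => sSup ((fun P => tpower n P (φ m)) '' {P ∈ 𝔓 | μ P = m}))
        '' (μ '' 𝔓) with hS2
    have hub : ∀ x ∈ S2, x ≤ 1 := by
      rintro x ⟨m, hm, rfl⟩
      apply Real.sSup_le
      · rintro y ⟨P, hP, rfl⟩
        exact (tpower_nonneg_le_one P (hφ m).1 (fun z => (hφ m).2 z)).2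
      · norm_num
    refine le_antisymm (Real.sSup_le hub (by norm_num)) ?_
    by_contra hlt
    push_neg at hlt
    set δ := 1 - sSup S2 with hδ
    have hδpos : 0 < δ := by simp only [hδ]; linarith
    obtain ⟨m0, hm0mem, P', hP'mem, hμP', -, htp⟩ := construction δ hδpos
    have h1 : tpower n P' (φ m0) ∈ (fun P => tpower n P (φ m0)) '' {P ∈ 𝔓 | μ P = m0} :=
      Set.mem_image_of_mem _ ⟨hP'mem, hμP'⟩
    have hbddI : BddAbove ((fun P => tpower n P (φ m0)) '' {P ∈ 𝔓 | μ P = m0}) := by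
      refine ⟨1, ?_⟩
      rintro y ⟨P, hP, rfl⟩
      exact (tpower_nonneg_le_one P (hφ m0).1 (fun z => (hφ m0).2 z)).2
    have h2 : tpower n P' (φ m0) ≤ sSup ((fun P => tpower n P (φ m0)) '' {P ∈ 𝔓 | μ P = m0}) :=
      le_csSup hbddI h1
    have h3 : sSup ((fun P => tpower n P (φ m0)) '' {P ∈ 𝔓 | μ P = m0}) ∈ S2 :=
      Set.mem_image_of_mem _ hm0mem
    have h4 : sSup ((fun P => tpower n P (φ m0)) '' {P ∈ 𝔓 | μ P = m0}) ≤ sSup S2 :=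
      le_csSup ⟨1, hub⟩ h3
    have : 1 - δ = sSup S2 := by simp [hδ]
    linarith
end
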